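/- arXiv:2601.02330 — 3 statements merged into one kernel-verified Lean document; each statement's English description precedes it below -/
import Mathlib

section
/- Recursive construction of optimal blocks (existence direction): if there exists a vector v_i ∈ F_2^Q such that both an optimal t_1-error-building block for v_i and an optimal t_2-error-building block for v_i ⊕ v are nonempty, then letting v_b minimize M(O_{t_1}(v_i)) + M(O_{t_2}(v_i ⊕ v)) over all v_i ∈ F_2^Q, the multiset sum O_{t_1}(v_b) ⊎ O_{t_2}(v_b ⊕ v) is an optimal (t_1+t_2)-error-building block for v, and its penalty equals M(O_{t_1}(v_b)) + M(O_{t_2}(v_b ⊕ v)). -/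
open scoped ENNReal

/-- Mod-2 sum of the columns of `h` indexed by the multiset `S` (with multiplicity). -/
def colSum {N Q : ℕ} (h : Fin N → Fin Q → ZMod 2) (S : Multiset (Fin N)) :
    Fin Q → ZMod 2 :=
  (S.map h).sum

/-- Block penalty: sum of the nonnegative reliabilities over `S` (with multiplicity). -/
def penalty {N : ℕ} (w : Fin N → NNReal) (S : Multiset (Fin N)) : NNReal :=
  (S.map w).sum

/-- Minimal penalty of a `t`-error-building block for `v` (`⊤` if none exists). -/
noncomputable def mPen {N Q : ℕ} (h : Fin N → Fin Q → ZMod 2) (w : Fin N → NNReal)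
    (t : ℕ) (v : Fin Q → ZMod 2) : ℝ≥0∞ :=
  sInf ((fun S => ((penalty w S : NNReal) : ℝ≥0∞)) ''
    {S : Multiset (Fin N) | Multiset.card S = t ∧ colSum h S = v})

lemma colSum_add {N Q : ℕ} (h : Fin N → Fin Q → ZMod 2) (S T : Multiset (Fin N)) :
    colSum h (S + T) = colSum h S + colSum h T := by
  simp [colSum]

lemma penalty_add {N : ℕ} (w : Fin N → NNReal) (S T : Multiset (Fin N)) :
    penalty w (S + T) = penalty w S + penalty w T := by
  simp [penalty]

lemma multiset_split {α : Type*} (S : Multiset α) (t1 t2 : ℕ)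
    (hc : Multiset.card S = t1 + t2) :
    ∃ S1 S2 : Multiset α, S = S1 + S2 ∧ Multiset.card S1 = t1 ∧ Multiset.card S2 = t2 := by
  refine ⟨(S.toList.take t1 : List α), (S.toList.drop t1 : List α), ?_, ?_, ?_⟩
  · conv_lhs => rw [← S.coe_toList, ← List.take_append_drop t1 S.toList]
    simp
  · simp only [Multiset.coe_card, List.length_take, Multiset.length_toList, hc]
    omega
  · simp only [Multiset.coe_card, List.length_drop, Multiset.length_toList, hc]
    omega

lemma mPen_le {N Q : ℕ} (h : Fin N → Fin Q → ZMod 2) (w : Fin N → NNReal)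
    (t : ℕ) (S : Multiset (Fin N)) (hc : Multiset.card S = t) :
    mPen h w t (colSum h S) ≤ ((penalty w S : NNReal) : ℝ≥0∞) :=
  sInf_le ⟨S, ⟨hc, rfl⟩, rfl⟩

/-- combining an optimal `t₁`-block for the best decomposition vector `v_b`
with an optimal `t₂`-block for `v_b ⊕ v` yields an optimal `(t₁+t₂)`-block for `v`,
whose penalty is the sum of the two penalties. -/
theorem stmt2 {N Q : ℕ} (h : Fin N → Fin Q → ZMod 2) (w : Fin N → NNReal)
    (v vb : Fin Q → ZMod 2) (t1 t2 : ℕ) (B1 B2 : Multiset (Fin N))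
    (hB1 : Multiset.card B1 = t1 ∧ colSum h B1 = vb ∧
      ((penalty w B1 : NNReal) : ℝ≥0∞) = mPen h w t1 vb)
    (hB2 : Multiset.card B2 = t2 ∧ colSum h B2 = vb + v ∧
      ((penalty w B2 : NNReal) : ℝ≥0∞) = mPen h w t2 (vb + v))
    (hvb : ∀ vi : Fin Q → ZMod 2,
      mPen h w t1 vb + mPen h w t2 (vb + v) ≤ mPen h w t1 vi + mPen h w t2 (vi + v)) :
    Multiset.card (B1 + B2) = t1 + t2 ∧ colSum h (B1 + B2) = v ∧
    penalty w (B1 + B2) = penalty w B1 + penalty w B2 ∧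
    mPen h w (t1 + t2) v = ((penalty w (B1 + B2) : NNReal) : ℝ≥0∞) := by
  obtain ⟨hc1, hs1, hp1⟩ := hB1
  obtain ⟨hc2, hs2, hp2⟩ := hB2
  have hself : ∀ x : Fin Q → ZMod 2, x + x = 0 := by
    intro x; funext q
    exact CharTwo.add_self_eq_zero _
  have hsum : colSum h (B1 + B2) = v := by
    rw [colSum_add, hs1, hs2, ← add_assoc, hself, zero_add]
  refine ⟨by simp [hc1, hc2], hsum, penalty_add w B1 B2, le_antisymm ?_ ?_⟩
  · have := mPen_le h w (t1 + t2) (B1 + B2) (by simp [hc1, hc2])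
    rwa [hsum] at this
  · rw [penalty_add, ENNReal.coe_add, hp1, hp2]
    apply le_sInf
    rintro x ⟨S, ⟨hSc, hSv⟩, rfl⟩
    obtain ⟨S1, S2, rfl, h1, h2⟩ := multiset_split S t1 t2 hSc
    have hS2 : colSum h S2 = colSum h S1 + v := by
      rw [← hSv, colSum_add, ← add_assoc, hself, zero_add]
    calc mPen h w t1 vb + mPen h w t2 (vb + v)
        ≤ mPen h w t1 (colSum h S1) + mPen h w t2 (colSum h S1 + v) := hvb _
      _ ≤ ((penalty w S1 : NNReal) : ℝ≥0∞) + ((penalty w S2 : NNReal) : ℝ≥0∞) := by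
          gcongr
          · exact mPen_le h w t1 S1 h1
          · rw [← hS2]; exact mPen_le h w t2 S2 h2
      _ = ((penalty w (S1 + S2) : NNReal) : ℝ≥0∞) := by rw [penalty_add, ENNReal.coe_add]
end

section
/- Superadditivity upper bound (combination direction): for any v, v' ∈ F_2^Q and sizes t_1, t_2 ≥ 1, if B_1 is a t_1-error-building block for v' and B_2 is a t_2-error-building block for v' ⊕ v, then the multiset sum B_1 ⊎ B_2 is a (t_1+t_2)-error-building block for v with penalty M(B_1) + M(B_2); hence m_{t_1+t_2}(v) ≤ m_{t_1}(v') + m_{t_2}(v' ⊕ v) for every v'. -/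
open scoped ENNReal

lemma combine {N Q : ℕ} (h : Fin N → Fin Q → ZMod 2)
    (v v' : Fin Q → ZMod 2) (t1 t2 : ℕ)
    (B1 B2 : Multiset (Fin N))
    (hB1 : Multiset.card B1 = t1 ∧ colSum h B1 = v')
    (hB2 : Multiset.card B2 = t2 ∧ colSum h B2 = v' + v) :
    Multiset.card (B1 + B2) = t1 + t2 ∧ colSum h (B1 + B2) = v := by
  obtain ⟨h1, h1'⟩ := hB1
  obtain ⟨h2, h2'⟩ := hB2
  refine ⟨by simp [h1, h2], ?_⟩
  rw [colSum_add, h1', h2']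
  funext q
  have key : ∀ a b : ZMod 2, a + (a + b) = b := by decide
  exact key _ _

/-- combination direction: a `t₁`-block for `v'` and a `t₂`-block for
`v' ⊕ v` combine to a `(t₁+t₂)`-block for `v` with additive penalty; hence
`m_{t₁+t₂}(v) ≤ m_{t₁}(v'') + m_{t₂}(v'' ⊕ v)` for every `v''`. -/
theorem stmt12 {N Q : ℕ} (h : Fin N → Fin Q → ZMod 2) (w : Fin N → NNReal)
    (v v' : Fin Q → ZMod 2) (t1 t2 : ℕ) (ht1 : 1 ≤ t1) (ht2 : 1 ≤ t2)
    (B1 B2 : Multiset (Fin N))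
    (hB1 : Multiset.card B1 = t1 ∧ colSum h B1 = v')
    (hB2 : Multiset.card B2 = t2 ∧ colSum h B2 = v' + v) :
    (Multiset.card (B1 + B2) = t1 + t2 ∧ colSum h (B1 + B2) = v ∧
      penalty w (B1 + B2) = penalty w B1 + penalty w B2) ∧
    ∀ v'' : Fin Q → ZMod 2,
      mPen h w (t1 + t2) v ≤ mPen h w t1 v'' + mPen h w t2 (v'' + v) := by
  obtain ⟨hc, hs⟩ := combine h v v' t1 t2 B1 B2 hB1 hB2
  refine ⟨⟨hc, hs, penalty_add w B1 B2⟩, fun v'' => ?_⟩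
  rw [mPen, mPen, mPen, ENNReal.sInf_add]
  refine le_iInf₂ fun x hx => ?_
  obtain ⟨S1, hS1, rfl⟩ := hx
  rw [add_comm _ (sInf _), ENNReal.sInf_add]
  refine le_iInf₂ fun y hy => ?_
  obtain ⟨S2, hS2, rfl⟩ := hy
  have hcomb := combine h v v'' t1 t2 S1 S2 hS1 hS2
  refine sInf_le ⟨S1 + S2, hcomb, ?_⟩
  simp [penalty_add, add_comm]
end

section
/- Monotone subblock penalty bound: if O_t(s) is a minimal-penalty t-error-building block for s and X is any nonempty sub-multiset of O_t(s) of size t', with v_X = ⊕_{j∈X} h_j, then X is a minimal-penalty t'-error-building block for v_X, i.e., m_{t'}(v_X) = M(X). -/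
open scoped ENNReal

/-- any nonempty sub-multiset `X` of size `t'` of a minimal-penalty
`t`-error-building block for `s` is itself a minimal-penalty `t'`-error-building block
for the vector `v_X` it sums to: `m_{t'}(v_X) = M(X)`. -/
theorem stmt15 {N Q : ℕ} (h : Fin N → Fin Q → ZMod 2) (w : Fin N → NNReal)
    (s : Fin Q → ZMod 2) (t t' : ℕ) (O X : Multiset (Fin N))
    (hOcard : Multiset.card O = t) (hOsum : colSum h O = s)
    (hOopt : ((penalty w O : NNReal) : ℝ≥0∞) = mPen h w t s)
    (hX : X ≤ O) (hXne : X ≠ 0) (hXcard : Multiset.card X = t') :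
    mPen h w t' (colSum h X) = ((penalty w X : NNReal) : ℝ≥0∞) := by
  have hOX : O - X + X = O := tsub_add_cancel_of_le hX
  have colAdd : ∀ A B : Multiset (Fin N), colSum h (A + B) = colSum h A + colSum h B := by
    intro A B; simp [colSum, Multiset.map_add]
  have penAdd : ∀ A B : Multiset (Fin N), penalty w (A + B) = penalty w A + penalty w B := by
    intro A B; simp [penalty, Multiset.map_add]
  apply le_antisymm
  · exact sInf_le ⟨X, ⟨hXcard, rfl⟩, rfl⟩
  · apply le_sInf
    rintro b ⟨S, ⟨hScard, hSsum⟩, rfl⟩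
    -- (O - X) + S is a t-block for s
    have hcard : Multiset.card (O - X + S) = t := by
      have := congrArg Multiset.card hOX
      simp only [Multiset.card_add] at this ⊢
      omega
    have hsum : colSum h (O - X + S) = s := by
      rw [colAdd, hSsum, ← colAdd, hOX, hOsum]
    have hle : ((penalty w O : NNReal) : ℝ≥0∞) ≤ ((penalty w (O - X + S) : NNReal) : ℝ≥0∞) := by
      rw [hOopt]
      exact sInf_le ⟨O - X + S, ⟨hcard, hsum⟩, rfl⟩
    have hle' : penalty w O ≤ penalty w (O - X + S) := by exact_mod_cast hle
    rw [penAdd] at hle'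
    nth_rewrite 1 [← hOX] at hle'
    rw [penAdd] at hle'
    have : penalty w X ≤ penalty w S := le_of_add_le_add_left hle'
    simpa using (ENNReal.coe_le_coe.mpr this)
end
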